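/- Let h : 2^N → ℝ≥0 be a monotone submodular set function on a finite ground set N with h(∅) = 0, and let H(x) = Σ_{U ⊆ N} h(U) Π_{e ∈ U} x_e Π_{e ∉ U} (1 − x_e) be its multilinear extension on [0,1]^N. If y, z ∈ [0,1]^N satisfy y_e · z_e = 0 for every e ∈ N (disjoint supports) and y + z ∈ [0,1]^N, then H(y) + H(z) ≥ H(y + z). -/

import Mathlib

open Finset

/-- The multilinear extension of a set function `h` on a finite ground set. -/
noncomputable def mlExt {N : Type*} [Fintype N] [DecidableEq N]
    (h : Finset N → ℝ) (x : N → ℝ) : ℝ :=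
  ∑ U ∈ (Finset.univ : Finset N).powerset,
    (∏ e ∈ U, x e) * (∏ e ∈ Finset.univ \ U, (1 - x e)) * h U

lemma step {N : Type*} [DecidableEq N] (x : N → ℝ) {a : N} {s : Finset N}
    (ha : a ∉ s) (F : Finset N → ℝ) :
    ∑ U ∈ (insert a s).powerset,
        (∏ e ∈ U, x e) * (∏ e ∈ insert a s \ U, (1 - x e)) * F U
    = ∑ U ∈ s.powerset, (∏ e ∈ U, x e) * (∏ e ∈ s \ U, (1 - x e)) *
        ((1 - x a) * F U + x a * F (insert a U)) := by
  rw [Finset.sum_powerset_insert ha, ← Finset.sum_add_distrib]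
  refine Finset.sum_congr rfl fun U hU => ?_
  rw [Finset.mem_powerset] at hU
  have haU : a ∉ U := fun h => ha (hU h)
  have haS : a ∉ s \ U := by simp [ha]
  have e1 : insert a s \ U = insert a (s \ U) :=
    Finset.insert_sdiff_of_notMem _ haU
  have e2 : insert a s \ insert a U = s \ U := by
    ext e
    simp only [Finset.mem_sdiff, Finset.mem_insert]
    by_cases hea : e = a
    · subst hea; simp [ha]
    · tauto
  rw [e1, e2, Finset.prod_insert haS, Finset.prod_insert haU]
  ring

lemma wt_sum {N : Type*} [DecidableEq N] (x : N → ℝ) (s : Finset N) :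
    ∑ U ∈ s.powerset, (∏ e ∈ U, x e) * ∏ e ∈ s \ U, (1 - x e) = 1 := by
  induction s using Finset.induction with
  | empty => simp
  | @insert a s ha ih =>
    calc ∑ U ∈ (insert a s).powerset,
          (∏ e ∈ U, x e) * ∏ e ∈ insert a s \ U, (1 - x e)
        = ∑ U ∈ (insert a s).powerset,
          (∏ e ∈ U, x e) * (∏ e ∈ insert a s \ U, (1 - x e)) * 1 := by
          simp
      _ = ∑ U ∈ s.powerset, (∏ e ∈ U, x e) * (∏ e ∈ s \ U, (1 - x e)) *
            ((1 - x a) * 1 + x a * 1) := step x ha (fun _ => (1 : ℝ))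
      _ = ∑ U ∈ s.powerset, (∏ e ∈ U, x e) * ∏ e ∈ s \ U, (1 - x e) := by
          refine Finset.sum_congr rfl fun U _ => by ring
      _ = 1 := ih

lemma key {N : Type*} [DecidableEq N] (y z : N → ℝ) (hd : ∀ e, y e * z e = 0)
    (s : Finset N) (g : Finset N → ℝ) :
    ∑ U ∈ s.powerset,
        (∏ e ∈ U, (y e + z e)) * (∏ e ∈ s \ U, (1 - (y e + z e))) * g U
    = ∑ A ∈ s.powerset, ∑ B ∈ s.powerset,
        ((∏ e ∈ A, y e) * ∏ e ∈ s \ A, (1 - y e)) *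
        (((∏ e ∈ B, z e) * ∏ e ∈ s \ B, (1 - z e)) * g (A ∪ B)) := by
  induction s using Finset.induction generalizing g with
  | empty => simp
  | @insert a s ha ih =>
    -- transform LHS
    have hL : ∑ U ∈ (insert a s).powerset,
        (∏ e ∈ U, (y e + z e)) * (∏ e ∈ insert a s \ U, (1 - (y e + z e))) * g U
      = ∑ A ∈ s.powerset, ∑ B ∈ s.powerset,
          ((∏ e ∈ A, y e) * ∏ e ∈ s \ A, (1 - y e)) *
          (((∏ e ∈ B, z e) * ∏ e ∈ s \ B, (1 - z e)) *
            ((1 - (y a + z a)) * g (A ∪ B) + (y a + z a) * g (insert a (A ∪ B)))) := by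
      rw [step (fun e => y e + z e) ha g]
      exact ih (fun U => (1 - (y a + z a)) * g U + (y a + z a) * g (insert a U))
    rw [hL]
    -- transform RHS inner sums
    set T : Finset N → ℝ := fun A => ∑ B ∈ s.powerset,
        ((∏ e ∈ B, z e) * ∏ e ∈ s \ B, (1 - z e)) *
          ((1 - z a) * g (A ∪ B) + z a * g (insert a (A ∪ B))) with hT
    have inner : ∀ A : Finset N,
        ∑ B ∈ (insert a s).powerset,
          ((∏ e ∈ A, y e) * ∏ e ∈ insert a s \ A, (1 - y e)) *
          (((∏ e ∈ B, z e) * ∏ e ∈ insert a s \ B, (1 - z e)) * g (A ∪ B))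
        = ((∏ e ∈ A, y e) * ∏ e ∈ insert a s \ A, (1 - y e)) * T A := by
      intro A
      rw [← Finset.mul_sum]
      congr 1
      have := step z ha (fun B => g (A ∪ B))
      simp only [mul_assoc] at this ⊢
      rw [this, hT]
      refine Finset.sum_congr rfl fun B _ => ?_
      rw [Finset.union_insert]
      ring
    rw [Finset.sum_congr rfl (fun A _ => inner A), step y ha T]
    -- now both sides are sums over s.powerset
    refine Finset.sum_congr rfl fun A hA => ?_
    rw [Finset.mul_sum]
    rw [hT]
    simp only [Finset.insert_union, Finset.union_insert, Finset.insert_idem,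
      Finset.mul_sum, ← Finset.sum_add_distrib]
    rw [← Finset.mul_sum]
    rw [Finset.mul_sum]
    refine Finset.sum_congr rfl fun B _ => ?_
    linear_combination (((∏ e ∈ A, y e) * ∏ e ∈ s \ A, (1 - y e)) *
      (((∏ e ∈ B, z e) * ∏ e ∈ s \ B, (1 - z e)) *
        (g (insert a (A ∪ B)) - g (A ∪ B)))) * hd a

theorem stmt2 {N : Type*} [Fintype N] [DecidableEq N] (h : Finset N → ℝ)
    (hnonneg : ∀ U, 0 ≤ h U) (h0 : h ∅ = 0)
    (hmono : ∀ U V : Finset N, U ⊆ V → h U ≤ h V)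
    (hsub : ∀ U V : Finset N, h U + h V ≥ h (U ∪ V) + h (U ∩ V))
    (y z : N → ℝ)
    (hy : ∀ e, 0 ≤ y e ∧ y e ≤ 1) (hz : ∀ e, 0 ≤ z e ∧ z e ≤ 1)
    (hdisj : ∀ e, y e * z e = 0)
    (hyz : ∀ e, y e + z e ≤ 1) :
    mlExt h y + mlExt h z ≥ mlExt h (fun e => y e + z e) := by
  have hwy : ∀ A : Finset N, 0 ≤ (∏ e ∈ A, y e) * ∏ e ∈ Finset.univ \ A, (1 - y e) :=
    fun A => mul_nonneg (Finset.prod_nonneg fun e _ => (hy e).1)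
      (Finset.prod_nonneg fun e _ => by linarith [(hy e).2])
  have hwz : ∀ B : Finset N, 0 ≤ (∏ e ∈ B, z e) * ∏ e ∈ Finset.univ \ B, (1 - z e) :=
    fun B => mul_nonneg (Finset.prod_nonneg fun e _ => (hz e).1)
      (Finset.prod_nonneg fun e _ => by linarith [(hz e).2])
  have hkey := key y z hdisj Finset.univ h
  have hsubadd : ∀ A B : Finset N, h (A ∪ B) ≤ h A + h B := by
    intro A B
    have h1 := hsub A B
    have h2 := hnonneg (A ∩ B)
    linarith
  have hsplit :
      ∑ A ∈ (Finset.univ : Finset N).powerset, ∑ B ∈ (Finset.univ : Finset N).powerset,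
        ((∏ e ∈ A, y e) * ∏ e ∈ Finset.univ \ A, (1 - y e)) *
        (((∏ e ∈ B, z e) * ∏ e ∈ Finset.univ \ B, (1 - z e)) * (h A + h B))
      = mlExt h y + mlExt h z := by
    have e1 : mlExt h y = (∑ A ∈ (Finset.univ : Finset N).powerset,
        (∏ e ∈ A, y e) * (∏ e ∈ Finset.univ \ A, (1 - y e)) * h A) *
        ∑ B ∈ (Finset.univ : Finset N).powerset,
          (∏ e ∈ B, z e) * ∏ e ∈ Finset.univ \ B, (1 - z e) := by
      rw [wt_sum z, mul_one]; rfl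
    have e2 : mlExt h z = (∑ A ∈ (Finset.univ : Finset N).powerset,
        (∏ e ∈ A, y e) * ∏ e ∈ Finset.univ \ A, (1 - y e)) *
        ∑ B ∈ (Finset.univ : Finset N).powerset,
          (∏ e ∈ B, z e) * (∏ e ∈ Finset.univ \ B, (1 - z e)) * h B := by
      rw [wt_sum y, one_mul]; rfl
    rw [e1, e2, Finset.sum_mul_sum, Finset.sum_mul_sum, ← Finset.sum_add_distrib]
    refine Finset.sum_congr rfl fun A _ => ?_
    rw [← Finset.sum_add_distrib]
    refine Finset.sum_congr rfl fun B _ => ?_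
    ring
  calc mlExt h (fun e => y e + z e)
      = ∑ A ∈ (Finset.univ : Finset N).powerset,
          ∑ B ∈ (Finset.univ : Finset N).powerset,
          ((∏ e ∈ A, y e) * ∏ e ∈ Finset.univ \ A, (1 - y e)) *
          (((∏ e ∈ B, z e) * ∏ e ∈ Finset.univ \ B, (1 - z e)) * h (A ∪ B)) := hkey
    _ ≤ ∑ A ∈ (Finset.univ : Finset N).powerset,
          ∑ B ∈ (Finset.univ : Finset N).powerset,
          ((∏ e ∈ A, y e) * ∏ e ∈ Finset.univ \ A, (1 - y e)) *
          (((∏ e ∈ B, z e) * ∏ e ∈ Finset.univ \ B, (1 - z e)) * (h A + h B)) := by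
        refine Finset.sum_le_sum fun A _ => Finset.sum_le_sum fun B _ => ?_
        exact mul_le_mul_of_nonneg_left
          (mul_le_mul_of_nonneg_left (hsubadd A B) (hwz B)) (hwy A)
    _ = mlExt h y + mlExt h z := hsplit
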